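/- Let h : [0,1] → ℝ be continuous with modulus of continuity m : ℕ → ℕ (meaning |h(x) - h(y)| ≤ 2^{-k} whenever |x - y| ≤ 2^{-m(k)}), and let g : [0,1] → ℝ be of bounded variation. Then there exists a unique real number I such that for all k ∈ ℕ and every partition Z = (x_0, ..., x_n) of [0,1] with mesh x_i - x_{i-1} < 2^{-m(k+1)}, the Riemann-Stieltjes sum S(g,h,Z) = Σ_{i=1}^n h(x_i)(g(x_i) - g(x_{i-1})) satisfies |I - S(g,h,Z)| ≤ 2^{-k} · Var(g). -/

import Mathlib

/-- A partition of `[0,1]`: `0 = x 0 < x 1 < ... < x n = 1`. -/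
def IsPartition (n : ℕ) (x : ℕ → ℝ) : Prop :=
  x 0 = 0 ∧ x n = 1 ∧ ∀ i < n, x i < x (i + 1)

/-- The Riemann-Stieltjes sum `S(g,h,Z) = Σ h(x_i)(g(x_i) - g(x_{i-1}))`. -/
noncomputable def rsSum (g h : ℝ → ℝ) (n : ℕ) (x : ℕ → ℝ) : ℝ :=
  ∑ i ∈ Finset.range n, h (x (i + 1)) * (g (x (i + 1)) - g (x i))

lemma step_mono {α : Type*} [Preorder α] (p : ℕ) (y : ℕ → α)
    (h : ∀ t < p, y t ≤ y (t + 1)) : ∀ a b, a ≤ b → b ≤ p → y a ≤ y b := by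
  intro a b hab hbp
  induction b with
  | zero => interval_cases a; exact le_rfl
  | succ b ih =>
    rcases Nat.eq_or_lt_of_le hab with rfl | hlt
    · exact le_rfl
    · exact le_trans (ih (Nat.lt_succ_iff.mp hlt) (le_trans (Nat.le_succ b) hbp))
        (h b (Nat.lt_of_succ_le hbp))

lemma sum_blocks (f : ℕ → ℝ) (n : ℕ) (φ : ℕ → ℕ) (hφmono : ∀ i < n, φ i ≤ φ (i + 1)) :
    ∑ t ∈ Finset.range (φ n), f t - ∑ t ∈ Finset.range (φ 0), f t
      = ∑ i ∈ Finset.range n, ∑ t ∈ Finset.Ico (φ i) (φ (i + 1)), f t := by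
  induction n with
  | zero => simp
  | succ n ih =>
    have h1 : ∀ i < n, φ i ≤ φ (i + 1) := fun i hi => hφmono i (Nat.lt_succ_of_lt hi)
    rw [Finset.sum_range_succ, ← ih h1]
    have h2 : φ n ≤ φ (n + 1) := hφmono n (Nat.lt_succ_self n)
    have := Finset.sum_Ico_consecutive f (Nat.zero_le (φ n)) h2
    rw [Finset.range_eq_Ico, ← this, ← Finset.range_eq_Ico]
    ring

lemma sum_abs_le_var (g : ℝ → ℝ) (hbv : BoundedVariationOn g (Set.Icc 0 1))
    (p : ℕ) (y : ℕ → ℝ) (hmono : ∀ t < p, y t ≤ y (t + 1))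
    (hy : ∀ t ≤ p, y t ∈ Set.Icc (0:ℝ) 1) :
    ∑ t ∈ Finset.range p, |g (y (t + 1)) - g (y t)| ≤
      variationOnFromTo g (Set.Icc 0 1) 0 1 := by
  have hmono' := step_mono p y hmono
  set u : ℕ → ℝ := fun t => y (min t p) with hu
  have humono : Monotone u := by
    intro a b hab
    exact hmono' _ _ (min_le_min_right p hab) (min_le_right _ _)
  have hus : ∀ t, u t ∈ Set.Icc (0:ℝ) 1 := fun t => hy _ (min_le_right _ _)
  have key := eVariationOn.sum_le (f := g) (n := p) humono hus
  have hsum : ∀ t < p, u (t+1) = y (t+1) ∧ u t = y t := by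
    intro t ht
    constructor <;> simp [hu, min_eq_left, ht, Nat.succ_le_of_lt ht, Nat.le_of_lt ht]
  rw [variationOnFromTo.eq_of_le g _ (by norm_num : (0:ℝ) ≤ 1), Set.inter_self]
  have : ∑ t ∈ Finset.range p, |g (y (t + 1)) - g (y t)|
      = (∑ t ∈ Finset.range p, edist (g (u (t+1))) (g (u t))).toReal := by
    rw [ENNReal.toReal_sum (by intro t _; exact edist_ne_top _ _)]
    refine Finset.sum_congr rfl fun t ht => ?_
    rw [(hsum t (Finset.mem_range.mp ht)).1, (hsum t (Finset.mem_range.mp ht)).2]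
    rw [edist_dist, ENNReal.toReal_ofReal dist_nonneg, Real.dist_eq]
  rw [this]
  exact ENNReal.toReal_mono hbv key

/-- Refinement lemma: if `y` refines `x` via index map `φ`, and `x` has mesh ≤ 2^{-m k},
then the Riemann-Stieltjes sums differ by at most `2^{-k} · Var`. -/
lemma refine_bound (h g : ℝ → ℝ) (m : ℕ → ℕ)
    (hbv : BoundedVariationOn g (Set.Icc 0 1))
    (hm : ∀ k : ℕ, ∀ x ∈ Set.Icc (0:ℝ) 1, ∀ y ∈ Set.Icc (0:ℝ) 1,
      |x - y| ≤ (2:ℝ) ^ (-(m k : ℤ)) → |h x - h y| ≤ (2:ℝ) ^ (-(k : ℤ)))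
    (k n p : ℕ) (x y : ℕ → ℝ) (φ : ℕ → ℕ)
    (hymono : ∀ t < p, y t ≤ y (t + 1)) (hy0 : y 0 = 0) (hyp : y p = 1)
    (hφ0 : φ 0 = 0) (hφn : φ n = p) (hφmono : ∀ i < n, φ i ≤ φ (i + 1))
    (hφval : ∀ i ≤ n, y (φ i) = x i)
    (hmesh : ∀ i < n, x (i + 1) - x i ≤ (2:ℝ) ^ (-(m k : ℤ))) :
    |rsSum g h p y - rsSum g h n x| ≤
      (2:ℝ) ^ (-(k : ℤ)) * variationOnFromTo g (Set.Icc 0 1) 0 1 := by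
  have hymono' := step_mono p y hymono
  have hφmono' := step_mono n φ hφmono
  have hφle : ∀ i ≤ n, φ i ≤ p := fun i hi => hφn ▸ hφmono' i n hi le_rfl
  have hyIcc : ∀ t ≤ p, y t ∈ Set.Icc (0:ℝ) 1 := by
    intro t ht
    exact ⟨hy0 ▸ hymono' 0 t (Nat.zero_le t) ht, hyp ▸ hymono' t p ht le_rfl⟩
  -- Step 1: decompose rsSum over y into blocks
  have step1 : rsSum g h p y =
      ∑ i ∈ Finset.range n, ∑ t ∈ Finset.Ico (φ i) (φ (i + 1)),
        h (y (t + 1)) * (g (y (t + 1)) - g (y t)) := by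
    have := sum_blocks (fun t => h (y (t + 1)) * (g (y (t + 1)) - g (y t))) n φ hφmono
    rw [hφ0, hφn] at this
    simpa [rsSum] using this
  -- Step 2: telescoping of g increments
  have step2 : ∀ i < n, g (x (i + 1)) - g (x i) =
      ∑ t ∈ Finset.Ico (φ i) (φ (i + 1)), (g (y (t + 1)) - g (y t)) := by
    intro i hi
    rw [Finset.sum_Ico_eq_sub _ (hφmono i hi), Finset.sum_range_sub (fun t => g (y t)),
      Finset.sum_range_sub (fun t => g (y t)),
      hφval (i + 1) (Nat.succ_le_of_lt hi), hφval i (Nat.le_of_lt hi)]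
    ring
  -- Step 3: express difference
  have step3 : rsSum g h p y - rsSum g h n x =
      ∑ i ∈ Finset.range n, ∑ t ∈ Finset.Ico (φ i) (φ (i + 1)),
        (h (y (t + 1)) - h (x (i + 1))) * (g (y (t + 1)) - g (y t)) := by
    rw [step1, rsSum, ← Finset.sum_sub_distrib]
    refine Finset.sum_congr rfl fun i hi => ?_
    rw [step2 i (Finset.mem_range.mp hi), Finset.mul_sum, ← Finset.sum_sub_distrib]
    exact Finset.sum_congr rfl fun t _ => by ring
  -- per-element bound
  have hbound : ∀ i < n, ∀ t ∈ Finset.Ico (φ i) (φ (i + 1)),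
      |h (y (t + 1)) - h (x (i + 1))| ≤ (2:ℝ) ^ (-(k : ℤ)) := by
    intro i hi t ht
    obtain ⟨ht1, ht2⟩ := Finset.mem_Ico.mp ht
    have ht2' : t + 1 ≤ φ (i + 1) := Nat.succ_le_of_lt ht2
    have htp : t + 1 ≤ p := le_trans ht2' (hφle (i + 1) (Nat.succ_le_of_lt hi))
    have hxl : x i ≤ y (t + 1) := by
      rw [← hφval i (Nat.le_of_lt hi)]
      exact hymono' (φ i) (t + 1) (le_trans ht1 (Nat.le_succ t)) htp
    have hxr : y (t + 1) ≤ x (i + 1) := by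
      rw [← hφval (i + 1) (Nat.succ_le_of_lt hi)]
      exact hymono' (t + 1) (φ (i + 1)) ht2' (hφle (i + 1) (Nat.succ_le_of_lt hi))
    have hxIcc : x (i + 1) ∈ Set.Icc (0:ℝ) 1 := by
      rw [← hφval (i + 1) (Nat.succ_le_of_lt hi)]
      exact hyIcc _ (hφle (i + 1) (Nat.succ_le_of_lt hi))
    refine hm k _ (hyIcc _ htp) _ hxIcc ?_
    rw [abs_of_nonpos (by linarith)]
    have := hmesh i hi
    linarith
  -- combine
  have hk0 : (0:ℝ) ≤ (2:ℝ) ^ (-(k : ℤ)) := by positivity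
  rw [step3]
  calc |∑ i ∈ Finset.range n, ∑ t ∈ Finset.Ico (φ i) (φ (i + 1)),
        (h (y (t + 1)) - h (x (i + 1))) * (g (y (t + 1)) - g (y t))|
      ≤ ∑ i ∈ Finset.range n, ∑ t ∈ Finset.Ico (φ i) (φ (i + 1)),
        (2:ℝ) ^ (-(k : ℤ)) * |g (y (t + 1)) - g (y t)| := by
        refine le_trans (Finset.abs_sum_le_sum_abs _ _) (Finset.sum_le_sum fun i hi => ?_)
        refine le_trans (Finset.abs_sum_le_sum_abs _ _) (Finset.sum_le_sum fun t ht => ?_)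
        rw [abs_mul]
        exact mul_le_mul_of_nonneg_right (hbound i (Finset.mem_range.mp hi) t ht)
          (abs_nonneg _)
    _ = (2:ℝ) ^ (-(k : ℤ)) * ∑ t ∈ Finset.range p, |g (y (t + 1)) - g (y t)| := by
        have := sum_blocks (fun t => |g (y (t + 1)) - g (y t)|) n φ hφmono
        rw [hφ0, hφn] at this
        simp only [Finset.range_zero, Finset.sum_empty, sub_zero] at this
        rw [this, Finset.mul_sum]
        exact Finset.sum_congr rfl fun i _ => (Finset.mul_sum _ _ _).symm
    _ ≤ (2:ℝ) ^ (-(k : ℤ)) * variationOnFromTo g (Set.Icc 0 1) 0 1 :=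
        mul_le_mul_of_nonneg_left (sum_abs_le_var g hbv p y hymono hyIcc) hk0

lemma common_refinement (n n' : ℕ) (x x' : ℕ → ℝ)
    (hx : IsPartition n x) (hx' : IsPartition n' x') :
    ∃ (p : ℕ) (y : ℕ → ℝ) (φ ψ : ℕ → ℕ),
      (∀ t < p, y t ≤ y (t + 1)) ∧ y 0 = 0 ∧ y p = 1 ∧
      φ 0 = 0 ∧ φ n = p ∧ (∀ i < n, φ i ≤ φ (i + 1)) ∧ (∀ i ≤ n, y (φ i) = x i) ∧
      ψ 0 = 0 ∧ ψ n' = p ∧ (∀ i < n', ψ i ≤ ψ (i + 1)) ∧ (∀ i ≤ n', y (ψ i) = x' i) := by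
  obtain ⟨hx0, hxn, hxs⟩ := hx
  obtain ⟨hx'0, hx'n, hx's⟩ := hx'
  have xmono : ∀ a b, a ≤ b → b ≤ n → x a ≤ x b :=
    step_mono n x (fun t ht => le_of_lt (hxs t ht))
  have x'mono : ∀ a b, a ≤ b → b ≤ n' → x' a ≤ x' b :=
    step_mono n' x' (fun t ht => le_of_lt (hx's t ht))
  set F : Finset ℝ := ((Finset.range (n + 1)).image x) ∪ ((Finset.range (n' + 1)).image x')
    with hF
  have hmemx : ∀ i ≤ n, x i ∈ F := by
    intro i hi
    exact Finset.mem_union_left _ (Finset.mem_image.mpr ⟨i, Finset.mem_range.mpr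
      (Nat.lt_succ_of_le hi), rfl⟩)
  have hmemx' : ∀ i ≤ n', x' i ∈ F := by
    intro i hi
    exact Finset.mem_union_right _ (Finset.mem_image.mpr ⟨i, Finset.mem_range.mpr
      (Nat.lt_succ_of_le hi), rfl⟩)
  have hFbdd : ∀ z ∈ F, (0:ℝ) ≤ z ∧ z ≤ 1 := by
    intro z hz
    rcases Finset.mem_union.mp hz with hz | hz
    · obtain ⟨i, hi, rfl⟩ := Finset.mem_image.mp hz
      have hi' := Nat.lt_succ_iff.mp (Finset.mem_range.mp hi)
      exact ⟨hx0 ▸ xmono 0 i (Nat.zero_le i) hi', hxn ▸ xmono i n hi' le_rfl⟩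
    · obtain ⟨i, hi, rfl⟩ := Finset.mem_image.mp hz
      have hi' := Nat.lt_succ_iff.mp (Finset.mem_range.mp hi)
      exact ⟨hx'0 ▸ x'mono 0 i (Nat.zero_le i) hi', hx'n ▸ x'mono i n' hi' le_rfl⟩
  have h0F : (0:ℝ) ∈ F := hx0 ▸ hmemx 0 (Nat.zero_le n)
  have h1F : (1:ℝ) ∈ F := hxn ▸ hmemx n le_rfl
  set c := F.card with hc
  have hc0 : 0 < c := Finset.card_pos.mpr ⟨0, h0F⟩
  set e := F.orderIsoOfFin (rfl : F.card = c) with he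
  set p := c - 1 with hp
  have hpc : p < c := Nat.sub_lt hc0 one_pos
  set y : ℕ → ℝ := fun t => if ht : t < c then (e ⟨t, ht⟩ : ℝ) else 1 with hy
  have hyval : ∀ t (ht : t < c), y t = (e ⟨t, ht⟩ : ℝ) := fun t ht => dif_pos ht
  -- y at the index of a member recovers the member
  have hkey : ∀ z (hz : z ∈ F), y ((e.symm ⟨z, hz⟩ : Fin c) : ℕ) = z := by
    intro z hz
    rw [hyval _ (e.symm ⟨z, hz⟩).isLt]
    have : (⟨((e.symm ⟨z, hz⟩ : Fin c) : ℕ), (e.symm ⟨z, hz⟩).isLt⟩ : Fin c)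
        = e.symm ⟨z, hz⟩ := Fin.eta _ _
    rw [this, OrderIso.apply_symm_apply]
  -- bottom and top
  have hbot : (e ⟨0, hc0⟩ : ℝ) = 0 := by
    refine le_antisymm ?_ (hFbdd _ (e ⟨0, hc0⟩).2).1
    have h1 : (⟨0, hc0⟩ : Fin c) ≤ e.symm ⟨0, h0F⟩ := Fin.mk_le_mk.mpr (Nat.zero_le _)
    have := e.monotone h1
    rw [OrderIso.apply_symm_apply] at this
    exact this
  have htop : (e ⟨p, hpc⟩ : ℝ) = 1 := by
    refine le_antisymm (hFbdd _ (e ⟨p, hpc⟩).2).2 ?_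
    have h1 : e.symm ⟨1, h1F⟩ ≤ (⟨p, hpc⟩ : Fin c) :=
      Fin.mk_le_mk.mpr (Nat.le_sub_one_of_lt (e.symm ⟨1, h1F⟩).isLt)
    have := e.monotone h1
    rw [OrderIso.apply_symm_apply] at this
    exact this
  have hy0 : y 0 = 0 := by rw [hyval 0 hc0, hbot]
  have hyp : y p = 1 := by rw [hyval p hpc, htop]
  have hymono : ∀ t < p, y t ≤ y (t + 1) := by
    intro t ht
    have ht1 : t + 1 < c := by omega
    have ht2 : t < c := by omega
    rw [hyval t ht2, hyval (t + 1) ht1]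
    exact_mod_cast e.monotone (Fin.mk_le_mk.mpr (Nat.le_succ t))
  -- index maps
  set φ : ℕ → ℕ := fun i => ((e.symm ⟨x (min i n), hmemx _ (min_le_right i n)⟩ : Fin c) : ℕ)
    with hφ
  set ψ : ℕ → ℕ := fun i => ((e.symm ⟨x' (min i n'), hmemx' _ (min_le_right i n')⟩ : Fin c) : ℕ)
    with hψ
  have hφval : ∀ i ≤ n, y (φ i) = x i := by
    intro i hi
    simp only [hφ]
    rw [hkey]
    rw [min_eq_left hi]
  have hψval : ∀ i ≤ n', y (ψ i) = x' i := by
    intro i hi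
    simp only [hψ]
    rw [hkey]
    rw [min_eq_left hi]
  have hidx : ∀ (z : ℝ) (hz : z ∈ F) (t : Fin c), z = (e t : ℝ) →
      ((e.symm ⟨z, hz⟩ : Fin c) : ℕ) = (t : ℕ) := by
    intro z hz t hzt
    have : e.symm ⟨z, hz⟩ = t := by
      rw [OrderIso.symm_apply_eq]; exact Subtype.ext hzt
    rw [this]
  have hφ0 : φ 0 = 0 := by
    simp only [hφ]
    exact hidx _ _ ⟨0, hc0⟩ (by rw [Nat.zero_min, hx0, hbot])
  have hφn : φ n = p := by
    simp only [hφ]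
    exact hidx _ _ ⟨p, hpc⟩ (by rw [min_self, hxn, htop])
  have hψ0 : ψ 0 = 0 := by
    simp only [hψ]
    exact hidx _ _ ⟨0, hc0⟩ (by rw [Nat.zero_min, hx'0, hbot])
  have hψn : ψ n' = p := by
    simp only [hψ]
    exact hidx _ _ ⟨p, hpc⟩ (by rw [min_self, hx'n, htop])
  have hφmono : ∀ i < n, φ i ≤ φ (i + 1) := by
    intro i hi
    have : x (min i n) ≤ x (min (i + 1) n) := by
      rw [min_eq_left (le_of_lt hi), min_eq_left hi]
      exact le_of_lt (hxs i hi)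
    exact e.symm.monotone (Subtype.mk_le_mk.mpr this)
  have hψmono : ∀ i < n', ψ i ≤ ψ (i + 1) := by
    intro i hi
    have : x' (min i n') ≤ x' (min (i + 1) n') := by
      rw [min_eq_left (le_of_lt hi), min_eq_left hi]
      exact le_of_lt (hx's i hi)
    exact e.symm.monotone (Subtype.mk_le_mk.mpr this)
  exact ⟨p, y, φ, ψ, hymono, hy0, hyp, hφ0, hφn, hφmono, hφval, hψ0, hψn, hψmono, hψval⟩

lemma pow2_anti {a b : ℕ} (h : a ≤ b) : (2:ℝ)^(-(b:ℤ)) ≤ (2:ℝ)^(-(a:ℤ)) :=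
  zpow_le_zpow_right₀ one_le_two (by omega)

lemma pow2_half (k : ℕ) :
    (2:ℝ)^(-((k+1:ℕ):ℤ)) + (2:ℝ)^(-((k+1:ℕ):ℤ)) = (2:ℝ)^(-(k:ℤ)) := by
  push_cast
  rw [show -((k:ℤ)+1) = -(k:ℤ) - 1 by ring, zpow_sub₀ (two_ne_zero)]
  ring

lemma pow2_cancel (a : ℕ) : ((2^a : ℕ):ℝ) * (2:ℝ)^(-(a:ℤ)) = 1 := by
  push_cast
  rw [← zpow_natCast (2:ℝ) a, ← zpow_add₀ (two_ne_zero)]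
  simp

lemma exists_pow2_lt (V ε : ℝ) (hV : 0 ≤ V) (hε : 0 < ε) :
    ∃ k : ℕ, (2:ℝ)^(-(k:ℤ)) * V < ε := by
  obtain ⟨k, hk⟩ := exists_pow_lt_of_lt_one (show (0:ℝ) < ε/(V+1) by positivity)
    (by norm_num : (1/2:ℝ) < 1)
  refine ⟨k, ?_⟩
  have h1 : (2:ℝ)^(-(k:ℤ)) = (1/2)^k := by
    rw [one_div, inv_pow, ← zpow_natCast (2:ℝ) k, ← zpow_neg]
  have h2 : (1/2:ℝ)^k * V ≤ (1/2:ℝ)^k * (V+1) :=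
    mul_le_mul_of_nonneg_left (by linarith) (by positivity)
  have h3 : (1/2:ℝ)^k * (V+1) < ε/(V+1) * (V+1) :=
    mul_lt_mul_of_pos_right hk (by linarith)
  rw [div_mul_cancel₀ _ (by positivity : (V+1:ℝ) ≠ 0)] at h3
  rw [h1]; linarith

lemma unif_partition (a : ℕ) :
    IsPartition (2^a) (fun i => (i:ℝ) * (2:ℝ)^(-(a:ℤ))) := by
  refine ⟨by simp, pow2_cancel a, ?_⟩
  intro i _
  have hpos : (0:ℝ) < 2^(-(a:ℤ)) := by positivity
  show (i:ℝ) * _ < ((i+1:ℕ):ℝ) * _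
  push_cast
  nlinarith

lemma unif_step (a : ℕ) (i : ℕ) :
    ((i+1:ℕ):ℝ) * (2:ℝ)^(-(a:ℤ)) - (i:ℝ) * (2:ℝ)^(-(a:ℤ)) = (2:ℝ)^(-(a:ℤ)) := by
  push_cast; ring

theorem riemann_stieltjes_exists_unique (h g : ℝ → ℝ) (m : ℕ → ℕ)
    (hc : ContinuousOn h (Set.Icc 0 1))
    (hbv : BoundedVariationOn g (Set.Icc 0 1))
    (hm : ∀ k : ℕ, ∀ x ∈ Set.Icc (0:ℝ) 1, ∀ y ∈ Set.Icc (0:ℝ) 1,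
      |x - y| ≤ (2:ℝ) ^ (-(m k : ℤ)) → |h x - h y| ≤ (2:ℝ) ^ (-(k : ℤ))) :
    ∃! I : ℝ, ∀ (k n : ℕ) (x : ℕ → ℝ), IsPartition n x →
      (∀ i < n, x (i + 1) - x i < (2:ℝ) ^ (-(m (k + 1) : ℤ))) →
      |I - rsSum g h n x| ≤ (2:ℝ) ^ (-(k : ℤ)) * variationOnFromTo g (Set.Icc 0 1) 0 1 := by
  set V := variationOnFromTo g (Set.Icc 0 1) 0 1 with hV
  have hV0 : (0:ℝ) ≤ V := variationOnFromTo.nonneg_of_le _ _ (by norm_num)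
  set M : ℕ → ℕ := fun j => (Finset.range (j+1)).sup (fun k => m (k+1)) with hM
  have hMmono : Monotone M := fun a b hab =>
    Finset.sup_mono (Finset.range_subset_range.mpr (by omega))
  have hMk : ∀ k j, k ≤ j → m (k+1) ≤ M j := by
    intro k j hkj
    exact Finset.le_sup (f := fun k => m (k+1)) (Finset.mem_range.mpr (Nat.lt_succ_of_le hkj))
  set u : ℕ → ℕ → ℝ := fun j i => (i:ℝ) * (2:ℝ)^(-((M j + 1 : ℕ):ℤ)) with hu
  have hupart : ∀ j, IsPartition (2^(M j + 1)) (u j) := fun j => unif_partition (M j + 1)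
  set S : ℕ → ℝ := fun j => rsSum g h (2^(M j + 1)) (u j) with hS
  -- comparison of uniform sums
  have hSS : ∀ k j j', k ≤ j → j ≤ j' → |S j' - S j| ≤ (2:ℝ)^(-((k+1:ℕ):ℤ)) * V := by
    intro k j j' hkj hjj'
    obtain ⟨hy0, hyp, hys⟩ := hupart j'
    obtain ⟨hx0, hxn, hxs⟩ := hupart j
    have hMM : M j ≤ M j' := hMmono hjj'
    set φ : ℕ → ℕ := fun i => i * 2^(M j' - M j) with hφ
    have hφn : φ (2^(M j + 1)) = 2^(M j' + 1) := by
      simp only [hφ, ← pow_add]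
      congr 1
      omega
    have hφval : ∀ i ≤ 2^(M j + 1), u j' (φ i) = u j i := by
      intro i _
      simp only [hφ, hu]
      push_cast
      rw [mul_assoc]
      congr 1
      rw [← zpow_natCast (2:ℝ) (M j' - M j), ← zpow_add₀ (two_ne_zero)]
      congr 1
      omega
    have := refine_bound h g m hbv hm (k+1) (2^(M j + 1)) (2^(M j' + 1))
      (u j) (u j') φ (fun t ht => le_of_lt (hys t ht)) hy0 hyp
      (by simp [hφ]) hφn
      (fun i _ => Nat.mul_le_mul_right _ (Nat.le_succ i))
      hφval
      (by
        intro i _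
        rw [show u j (i+1) - u j i = (2:ℝ)^(-((M j + 1:ℕ):ℤ)) from unif_step _ i]
        exact pow2_anti (by have := hMk k j hkj; omega))
    exact this
  -- Cauchy sequence
  have hCauchy : CauchySeq S := by
    rw [Metric.cauchySeq_iff']
    intro ε hε
    obtain ⟨k, hk⟩ := exists_pow2_lt V ε hV0 hε
    refine ⟨k, fun j hj => ?_⟩
    rw [Real.dist_eq]
    calc |S j - S k| ≤ (2:ℝ)^(-((k+1:ℕ):ℤ)) * V := hSS k k j le_rfl hj
      _ ≤ (2:ℝ)^(-(k:ℤ)) * V := mul_le_mul_of_nonneg_right (pow2_anti (Nat.le_succ k)) hV0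
      _ < ε := hk
  obtain ⟨I, hItendsto⟩ := cauchySeq_tendsto_of_complete hCauchy
  -- the main estimate for arbitrary partitions
  have hmain : ∀ (k n : ℕ) (x : ℕ → ℝ), IsPartition n x →
      (∀ i < n, x (i + 1) - x i < (2:ℝ) ^ (-(m (k + 1) : ℤ))) →
      |I - rsSum g h n x| ≤ (2:ℝ) ^ (-(k : ℤ)) * V := by
    intro k n x hpart hmesh
    have key : ∀ j, k ≤ j → |S j - rsSum g h n x| ≤ (2:ℝ)^(-(k:ℤ)) * V := by
      intro j hkj
      obtain ⟨p, y, φ, ψ, hymono, hy0, hyp, hφ0, hφn, hφmono, hφval,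
        hψ0, hψn, hψmono, hψval⟩ := common_refinement n (2^(M j + 1)) x (u j) hpart (hupart j)
      have b1 := refine_bound h g m hbv hm (k+1) n p x y φ hymono hy0 hyp hφ0 hφn hφmono
        hφval (fun i hi => le_of_lt (hmesh i hi))
      have b2 := refine_bound h g m hbv hm (k+1) (2^(M j + 1)) p (u j) y ψ hymono hy0 hyp
        hψ0 hψn hψmono hψval
        (by
          intro i _
          rw [show u j (i+1) - u j i = (2:ℝ)^(-((M j + 1:ℕ):ℤ)) from unif_step _ i]
          exact pow2_anti (by have := hMk k j hkj; omega))
      have habs : |S j - rsSum g h n x| ≤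
          |rsSum g h p y - rsSum g h n x| + |rsSum g h p y - S j| := by
        have := abs_sub (rsSum g h p y - rsSum g h n x) (rsSum g h p y - S j)
        calc |S j - rsSum g h n x|
            = |(rsSum g h p y - rsSum g h n x) - (rsSum g h p y - S j)| := by ring_nf
          _ ≤ _ := abs_sub _ _
      calc |S j - rsSum g h n x| ≤ |rsSum g h p y - rsSum g h n x| + |rsSum g h p y - S j| :=
            habs
        _ ≤ (2:ℝ)^(-((k+1:ℕ):ℤ)) * V + (2:ℝ)^(-((k+1:ℕ):ℤ)) * V := add_le_add b1 b2
        _ = ((2:ℝ)^(-((k+1:ℕ):ℤ)) + (2:ℝ)^(-((k+1:ℕ):ℤ))) * V := by ring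
        _ = (2:ℝ)^(-(k:ℤ)) * V := by rw [pow2_half]
    refine le_of_forall_pos_le_add ?_
    intro ε hε
    obtain ⟨N, hN⟩ := (Metric.tendsto_atTop.mp hItendsto) ε hε
    set j := max N k with hj
    have h1 : |I - S j| < ε := by
      have := hN j (le_max_left N k)
      rwa [Real.dist_eq, abs_sub_comm] at this
    have h2 := key j (le_max_right N k)
    calc |I - rsSum g h n x| ≤ |I - S j| + |S j - rsSum g h n x| := by
          have := abs_add_le (I - S j) (S j - rsSum g h n x)
          simpa using this
      _ ≤ ε + (2:ℝ)^(-(k:ℤ)) * V := add_le_add (le_of_lt h1) h2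
      _ = (2:ℝ)^(-(k:ℤ)) * V + ε := by ring
  refine ⟨I, hmain, ?_⟩
  intro J hJ
  have hdiff : ∀ k : ℕ, |J - I| ≤ (2:ℝ)^(-(k:ℤ)) * V + (2:ℝ)^(-(k:ℤ)) * V := by
    intro k
    set a := m (k+1) + 1 with ha
    have hpart := unif_partition a
    have hmesh : ∀ i < 2^a, (fun i : ℕ => (i:ℝ) * (2:ℝ)^(-(a:ℤ))) (i+1)
        - (fun i : ℕ => (i:ℝ) * (2:ℝ)^(-(a:ℤ))) i < (2:ℝ)^(-(m (k+1):ℤ)) := by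
      intro i _
      rw [show ((i+1:ℕ):ℝ) * (2:ℝ)^(-(a:ℤ)) - (i:ℝ) * (2:ℝ)^(-(a:ℤ))
          = (2:ℝ)^(-(a:ℤ)) from unif_step a i]
      exact zpow_lt_zpow_right₀ one_lt_two (by omega)
    have h1 := hJ k (2^a) _ hpart hmesh
    have h2 := hmain k (2^a) _ hpart hmesh
    calc |J - I| = |(J - rsSum g h (2^a) (fun i : ℕ => (i:ℝ) * (2:ℝ)^(-(a:ℤ))))
          - (I - rsSum g h (2^a) (fun i : ℕ => (i:ℝ) * (2:ℝ)^(-(a:ℤ))))| := by congr 1; ring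
      _ ≤ _ := le_trans (abs_sub _ _) (add_le_add h1 h2)
  have : ∀ ε : ℝ, 0 < ε → |J - I| ≤ 0 + ε := by
    intro ε hε
    obtain ⟨k, hk⟩ := exists_pow2_lt V (ε/2) hV0 (by linarith)
    have := hdiff k
    linarith
  have h0 : |J - I| ≤ 0 := le_of_forall_pos_le_add this
  have := abs_nonneg (J - I)
  have : J - I = 0 := by
    have := abs_eq_zero.mp (le_antisymm h0 (abs_nonneg _))
    exact this
  linarith
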